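/- Let λ = (1^{e₁} 2^{e₂} ⋯ d^{e_d}) be a partition of d. Let F ∈ ℂ[x,y] be a nonzero binary form of degree d admitting two inequivalent factorizations (G_r) and (H_r) of type λ, each having pairwise coprime components (for r ≠ r', G_r and G_{r'} have no common linear factor, and likewise for H). Let r₁ be the largest index r for which G_r is not a scalar multiple of H_r. Then there exists a linear form L such that L divides G_{r₁} but L does not divide H_{r₁}. -/

import Mathlib

open MvPolynomial


noncomputable section AuxLinear

/-- Normalized linear forms on `ℙ¹`: `ℓ none = y`, `ℓ (some a) = x - a y`. -/
def ell : Option ℂ → MvPolynomial (Fin 2) ℂ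
  | none => X 1
  | some a => X 0 - C a * X 1

lemma ell_isHomogeneous (u : Option ℂ) : (ell u).IsHomogeneous 1 := by
  cases u with
  | none => exact isHomogeneous_X _ _
  | some a =>
    refine (isHomogeneous_X _ _).sub ?_
    simpa using (isHomogeneous_C (Fin 2) a).mul (isHomogeneous_X ℂ 1)

/-- A point where `ell u` vanishes. -/
def ptOf : Option ℂ → (Fin 2 → ℂ)
  | none => ![1, 0]
  | some a => ![a, 1]

lemma eval_ptOf_self (u : Option ℂ) : eval (ptOf u) (ell u) = 0 := by
  cases u <;> simp [ell, ptOf]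

lemma eval_ptOf_ne {u v : Option ℂ} (h : u ≠ v) : eval (ptOf v) (ell u) ≠ 0 := by
  cases u with
  | none => cases v with
    | none => exact absurd rfl h
    | some b => simp [ell, ptOf]
  | some a => cases v with
    | none => simp [ell, ptOf]
    | some b =>
      have hba : b ≠ a := by rintro rfl; exact h rfl
      simp [ell, ptOf, sub_eq_zero, hba]

lemma ell_not_dvd {u v : Option ℂ} (h : u ≠ v) : ¬ ell v ∣ ell u := by
  rintro ⟨q, hq⟩
  have h1 : eval (ptOf v) (ell u) ≠ 0 := eval_ptOf_ne h
  apply h1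
  rw [hq, map_mul, eval_ptOf_self, zero_mul]

lemma prime_X0 : Prime (X 0 : MvPolynomial (Fin 2) ℂ) := by
  rw [← MulEquiv.prime_iff (e := (finSuccEquiv ℂ 1).toMulEquiv)]
  have : (finSuccEquiv ℂ 1).toMulEquiv (X 0) = Polynomial.X := finSuccEquiv_X_zero
  rw [this]
  exact Polynomial.prime_X

lemma prime_X1 : Prime (X 1 : MvPolynomial (Fin 2) ℂ) := by
  rw [← MulEquiv.prime_iff (e := (renameEquiv ℂ (Equiv.swap (0 : Fin 2) 1)).toMulEquiv)]
  have : (renameEquiv ℂ (Equiv.swap (0 : Fin 2) 1)).toMulEquiv (X 1)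
      = (X 0 : MvPolynomial (Fin 2) ℂ) := by
    show (renameEquiv ℂ (Equiv.swap (0 : Fin 2) 1)) (X 1) = _
    rw [renameEquiv_apply, rename_X, Equiv.swap_apply_right]
  rw [this]
  exact prime_X0

/-- The shear automorphism sending `X 0` to `X 0 - a • X 1`. -/
def shear (a : ℂ) : MvPolynomial (Fin 2) ℂ ≃ₐ[ℂ] MvPolynomial (Fin 2) ℂ :=
  AlgEquiv.ofAlgHom
    (aeval (fun i : Fin 2 => if i = 0 then X 0 - C a * X 1 else X 1))
    (aeval (fun i : Fin 2 => if i = 0 then X 0 + C a * X 1 else X 1))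
    (by
      apply algHom_ext
      intro i
      fin_cases i <;>
        simp [AlgHom.comp_apply, aeval_X, map_add, map_mul, algebraMap_eq])
    (by
      apply algHom_ext
      intro i
      fin_cases i <;>
        simp [AlgHom.comp_apply, aeval_X, map_sub, map_mul, algebraMap_eq])

lemma prime_ell (u : Option ℂ) : Prime (ell u) := by
  cases u with
  | none => exact prime_X1
  | some a =>
    have h0 : Prime (X 0 : MvPolynomial (Fin 2) ℂ) := prime_X0
    rw [← MulEquiv.prime_iff (e := (shear a).toMulEquiv)] at h0
    have : (shear a).toMulEquiv (X 0) = ell (some a) := by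
      show (shear a) (X 0) = _
      simp [shear, AlgEquiv.ofAlgHom, ell]
    rwa [this] at h0

lemma ell_ne_zero (u : Option ℂ) : ell u ≠ 0 := (prime_ell u).ne_zero

end AuxLinear


noncomputable section Aux2

/-- exponent vector of `x^j y^(n-j)` -/
def emj (n j : ℕ) : Fin 2 →₀ ℕ := Finsupp.single 0 j + Finsupp.single 1 (n - j)

/-- Homogenization at degree `n` of a univariate polynomial. -/
def homAt (n : ℕ) (p : Polynomial ℂ) : MvPolynomial (Fin 2) ℂ :=
  ∑ j ∈ Finset.range (n + 1), monomial (emj n j) (p.coeff j)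

lemma homAt_C (k : ℕ) (c : ℂ) : homAt k (Polynomial.C c) = C c * X 1 ^ k := by
  rw [homAt, Finset.sum_eq_single 0]
  · rw [Polynomial.coeff_C_zero]
    have h : emj k 0 = Finsupp.single 1 k := by simp [emj]
    rw [h, X_pow_eq_monomial, C_mul_monomial, mul_one]
  · intro j _ hj
    rw [Polynomial.coeff_C, if_neg hj, monomial_zero]
  · intro h
    exact absurd (Finset.mem_range.mpr (Nat.succ_pos k)) h

lemma homAt_X_mul (N : ℕ) (q : Polynomial ℂ) :
    homAt (N + 1) (Polynomial.X * q) = X 0 * homAt N q := by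
  rw [homAt, homAt, Finset.mul_sum, Finset.sum_range_succ']
  have h0 : (Polynomial.X * q).coeff 0 = 0 := by simp
  rw [h0, monomial_zero, add_zero]
  refine Finset.sum_congr rfl fun i _ => ?_
  rw [Polynomial.coeff_X_mul]
  have h2 : emj (N + 1) (i + 1) = Finsupp.single 0 1 + emj N i := by
    ext w; fin_cases w <;> simp [emj] <;> omega
  rw [h2, monomial_single_add, pow_one]

lemma homAt_C_mul (N : ℕ) (a : ℂ) (q : Polynomial ℂ) (hq : q.coeff (N + 1) = 0) :
    homAt (N + 1) (Polynomial.C a * q) = (C a * X 1) * homAt N q := by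
  rw [homAt, homAt, Finset.mul_sum, Finset.sum_range_succ]
  have h0 : (Polynomial.C a * q).coeff (N + 1) = 0 := by
    rw [Polynomial.coeff_C_mul, hq, mul_zero]
  rw [h0, monomial_zero, add_zero]
  refine Finset.sum_congr rfl fun i hi => ?_
  have hiN : i ≤ N := Nat.lt_succ_iff.mp (Finset.mem_range.mp hi)
  have h2 : emj (N + 1) i = Finsupp.single 1 1 + emj N i := by
    ext w; fin_cases w <;> simp [emj] <;> omega
  rw [Polynomial.coeff_C_mul, h2, monomial_single_add, pow_one]
  rw [mul_comm (C a) (X 1), mul_assoc, C_mul_monomial]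

lemma homAt_sub (n : ℕ) (p q : Polynomial ℂ) :
    homAt n (p - q) = homAt n p - homAt n q := by
  rw [homAt, homAt, homAt, ← Finset.sum_sub_distrib]
  refine Finset.sum_congr rfl fun j _ => ?_
  rw [Polynomial.coeff_sub, ← map_sub]

lemma homAt_X_sub_C_mul (N : ℕ) (a : ℂ) (q : Polynomial ℂ) (hq : q.natDegree ≤ N) :
    homAt (N + 1) ((Polynomial.X - Polynomial.C a) * q)
      = (X 0 - C a * X 1) * homAt N q := by
  have hc : q.coeff (N + 1) = 0 :=
    Polynomial.coeff_eq_zero_of_natDegree_lt (Nat.lt_succ_of_le hq)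
  rw [sub_mul, homAt_sub, homAt_X_mul, homAt_C_mul N a q hc, sub_mul]

end Aux2

noncomputable section Aux3
open MvPolynomial

lemma homAt_prod_linear (rs : Multiset ℂ) (k : ℕ) (c : ℂ) :
    homAt (Multiset.card rs + k)
        ((rs.map fun a => Polynomial.X - Polynomial.C a).prod * Polynomial.C c)
      = (rs.map fun a => ell (some a)).prod * (C c * X 1 ^ k) := by
  induction rs using Multiset.induction with
  | empty => simp [homAt_C]
  | cons a rs ih =>
    rw [Multiset.map_cons, Multiset.prod_cons, mul_assoc]
    have hcard : Multiset.card (a ::ₘ rs) + k = (Multiset.card rs + k) + 1 := by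
      rw [Multiset.card_cons]; omega
    have hdeg : ((rs.map fun a => Polynomial.X - Polynomial.C a).prod * Polynomial.C c).natDegree
        ≤ Multiset.card rs + k := by
      refine le_trans (Polynomial.natDegree_mul_le) ?_
      rw [Polynomial.natDegree_multiset_prod_X_sub_C_eq_card, Polynomial.natDegree_C]
      omega
    rw [hcard, homAt_X_sub_C_mul _ a _ hdeg, ih, Multiset.map_cons, Multiset.prod_cons]
    show ell (some a) * _ = _
    ring

lemma degree_fin2 (m : Fin 2 →₀ ℕ) : m.degree = m 0 + m 1 := by
  rw [Finsupp.degree_apply]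
  rw [Finset.sum_subset (Finset.subset_univ m.support)
    (by intro i _ hi; exact Finsupp.notMem_support_iff.mp hi)]
  exact Fin.sum_univ_two m

/-- Reconstruction: a homogeneous polynomial is the homogenization of an explicit
univariate polynomial. -/
lemma eq_homAt_of_isHomogeneous {f : MvPolynomial (Fin 2) ℂ} {n : ℕ}
    (hf : f.IsHomogeneous n) :
    f = homAt n (∑ j ∈ Finset.range (n + 1), Polynomial.monomial j (coeff (emj n j) f)) := by
  set p : Polynomial ℂ := ∑ j ∈ Finset.range (n + 1), Polynomial.monomial j (coeff (emj n j) f)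
    with hp
  have hcoeff : ∀ j ∈ Finset.range (n + 1), p.coeff j = coeff (emj n j) f := by
    intro j hj
    rw [hp, Polynomial.finset_sum_coeff, Finset.sum_eq_single j]
    · rw [Polynomial.coeff_monomial, if_pos rfl]
    · intro i _ hij
      rw [Polynomial.coeff_monomial, if_neg hij]
    · intro h; exact absurd hj h
  have hmem : ∀ m ∈ f.support, m = emj n (m 0) ∧ m 0 ∈ Finset.range (n + 1) := by
    intro m hm
    have hdeg : m 0 + m 1 = n := by
      rw [← degree_fin2, Finsupp.degree_eq_weight_one]
      exact hf (mem_support_iff.mp hm)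
    constructor
    · ext w
      fin_cases w <;> simp [emj] <;> omega
    · exact Finset.mem_range.mpr (by omega)
  rw [homAt]
  rw [Finset.sum_congr rfl fun j hj => by rw [hcoeff j hj]]
  have himg : (f.support.image fun m => m 0) ⊆ Finset.range (n + 1) := by
    intro j hj
    obtain ⟨m, hm, rfl⟩ := Finset.mem_image.mp hj
    exact (hmem m hm).2
  rw [← Finset.sum_subset himg (by
    intro j _ hj
    by_cases h : coeff (emj n j) f = 0
    · rw [h, monomial_zero]
    · exfalso
      apply hj
      refine Finset.mem_image.mpr ⟨emj n j, mem_support_iff.mpr h, ?_⟩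
      simp [emj])]
  rw [Finset.sum_image (by
    intro m hm m' hm' h
    rw [(hmem m hm).1, (hmem m' hm').1, show m 0 = m' 0 from h])]
  conv_lhs => rw [← support_sum_monomial_coeff f]
  refine Finset.sum_congr rfl fun m hm => ?_
  rw [← (hmem m hm).1]

/-- Every nonzero binary form over `ℂ` is a product of linear forms. -/
lemma exists_linear_rep {f : MvPolynomial (Fin 2) ℂ} {n : ℕ}
    (h0 : f ≠ 0) (hf : f.IsHomogeneous n) :
    ∃ (c : ℂ) (s : Multiset (Option ℂ)), c ≠ 0 ∧ Multiset.card s = n ∧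
      f = C c * (s.map ell).prod := by
  set p : Polynomial ℂ := ∑ j ∈ Finset.range (n + 1), Polynomial.monomial j (coeff (emj n j) f)
    with hp
  have hfp : f = homAt n p := eq_homAt_of_isHomogeneous hf
  have hp0 : p ≠ 0 := by
    rintro h
    apply h0
    rw [hfp, h, homAt]
    simp
  have hpd : p.natDegree ≤ n := by
    rw [hp]
    refine Polynomial.natDegree_sum_le_of_forall_le _ _ fun j hj => ?_
    refine le_trans (Polynomial.natDegree_monomial_le _) (Nat.lt_succ_iff.mp (Finset.mem_range.mp hj))
  have hsp : p.Splits := IsAlgClosed.splits p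
  have hroots : Multiset.card p.roots = p.natDegree :=
    (Polynomial.splits_iff_card_roots).mp hsp
  have heq : p = Polynomial.C p.leadingCoeff *
      (p.roots.map fun a => Polynomial.X - Polynomial.C a).prod :=
    hsp.eq_prod_roots
  refine ⟨p.leadingCoeff, p.roots.map some + Multiset.replicate (n - p.natDegree) none,
    Polynomial.leadingCoeff_ne_zero.mpr hp0, ?_, ?_⟩
  · rw [Multiset.card_add, Multiset.card_map, Multiset.card_replicate, hroots]
    omega
  · have hn : n = Multiset.card p.roots + (n - p.natDegree) := by omega
    have h2 : (p.roots.map fun a => Polynomial.X - Polynomial.C a).prod *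
        Polynomial.C p.leadingCoeff = p := by rw [mul_comm]; exact heq.symm
    have hmain := homAt_prod_linear p.roots (n - p.natDegree) p.leadingCoeff
    rw [h2, ← hn] at hmain
    rw [hfp, hmain]
    rw [Multiset.map_add, Multiset.prod_add, Multiset.map_map, Multiset.map_replicate,
      Multiset.prod_replicate]
    show (p.roots.map fun a => ell (some a)).prod * _ =
      C p.leadingCoeff * ((p.roots.map fun a => ell (some a)).prod * (ell none) ^ _)
    rw [show ell none = X 1 from rfl]
    ring

end Aux3

noncomputable section Aux4
open MvPolynomial

lemma ell_dvd_rep_iff {u : Option ℂ} {c : ℂ} (hc : c ≠ 0) (s : Multiset (Option ℂ)) :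
    ell u ∣ C c * (s.map ell).prod ↔ u ∈ s := by
  constructor
  · intro hdvd
    induction s using Multiset.induction with
    | empty =>
      exfalso
      simp only [Multiset.map_zero, Multiset.prod_zero, mul_one] at hdvd
      have hunit : IsUnit (C c : MvPolynomial (Fin 2) ℂ) :=
        (isUnit_iff_ne_zero.mpr hc).map (C : ℂ →+* MvPolynomial (Fin 2) ℂ)
      exact (prime_ell u).not_unit (isUnit_of_dvd_unit hdvd hunit)
    | cons v s ih =>
      rw [Multiset.map_cons, Multiset.prod_cons, mul_comm (ell v), ← mul_assoc] at hdvd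
      rcases ((prime_ell u).dvd_mul).mp hdvd with h | h
      · exact Multiset.mem_cons_of_mem (ih h)
      · have huv : u = v := by
          by_contra hne
          exact ell_not_dvd (Ne.symm hne) h
        rw [huv]; exact Multiset.mem_cons_self v s
  · intro hu
    exact Dvd.dvd.mul_left (Multiset.dvd_prod (Multiset.mem_map_of_mem ell hu)) _

lemma rep_unique : ∀ (s t : Multiset (Option ℂ)) (a b : ℂ), a ≠ 0 → b ≠ 0 →
    C a * (s.map ell).prod = C b * (t.map ell).prod → s = t := by
  intro s
  induction s using Multiset.induction with
  | empty =>
    intro t a b ha hb heq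
    by_contra ht
    obtain ⟨v, hv⟩ := Multiset.exists_mem_of_ne_zero (Ne.symm ht)
    have : ell v ∣ C a * ((0 : Multiset (Option ℂ)).map ell).prod := by
      rw [heq]
      exact (ell_dvd_rep_iff hb t).mpr hv
    have := (ell_dvd_rep_iff ha 0).mp this
    simp at this
  | cons u s ih =>
    intro t a b ha hb heq
    have hut : u ∈ t := by
      refine (ell_dvd_rep_iff hb t).mp ?_
      rw [← heq]
      refine (ell_dvd_rep_iff ha _).mpr (Multiset.mem_cons_self u s)
    have hte : t = u ::ₘ t.erase u := (Multiset.cons_erase hut).symm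
    rw [hte, Multiset.map_cons, Multiset.prod_cons, Multiset.map_cons, Multiset.prod_cons,
      mul_left_comm (C a), mul_left_comm (C b)] at heq
    have heq2 := mul_left_cancel₀ (ell_ne_zero u) heq
    rw [hte, ih (t.erase u) a b ha hb heq2]

lemma prod_rep (I : Finset ℕ) (A : ℕ → ℂ) (S : ℕ → Multiset (Option ℂ)) :
    ∏ r ∈ I, (C (A r) * ((S r).map ell).prod) ^ r
      = C (∏ r ∈ I, A r ^ r) * (((∑ r ∈ I, r • S r).map ell).prod) := by
  induction I using Finset.induction with
  | empty => simp
  | insert _ _ hx ih =>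
    rename_i x I'
    rw [Finset.prod_insert hx, Finset.prod_insert hx, Finset.sum_insert hx, ih,
      Multiset.map_add, Multiset.prod_add, Multiset.map_nsmul, Multiset.prod_nsmul,
      mul_pow, ← map_pow, map_mul]
    ring

end Aux4




/-- A factorization of type `λ = (1^{e₁} 2^{e₂} ⋯ d^{e_d})` of a binary form `F` of
degree `d`: a tuple `(G₁,…,G_d)` with `G_r` homogeneous of degree `e_r` and
`F = c·∏_{r=1}^d G_r^r` for some nonzero scalar `c`. -/
def IsFactorizationOfType (d : ℕ) (e : ℕ → ℕ) (F : MvPolynomial (Fin 2) ℂ)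
    (G : ℕ → MvPolynomial (Fin 2) ℂ) : Prop :=
  (∀ r ∈ Finset.Icc 1 d, (G r).IsHomogeneous (e r)) ∧
    ∃ c : ℂ, c ≠ 0 ∧ F = c • ∏ r ∈ Finset.Icc 1 d, G r ^ r

/-- Two factorizations `(G_r)`, `(H_r)` are equivalent if each `H_r` is a nonzero scalar
multiple of `G_r`. -/
def EquivFactorizations (d : ℕ) (G H : ℕ → MvPolynomial (Fin 2) ℂ) : Prop :=
  ∀ r ∈ Finset.Icc 1 d, ∃ c : ℂ, c ≠ 0 ∧ H r = c • G r

/-- The components of distinct indices of `(G_r)` have no common linear factor. -/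
def PairwiseCoprimeComponents (d : ℕ) (G : ℕ → MvPolynomial (Fin 2) ℂ) : Prop :=
  ∀ r ∈ Finset.Icc 1 d, ∀ r' ∈ Finset.Icc 1 d, r ≠ r' →
    ¬ ∃ L : MvPolynomial (Fin 2) ℂ, L ≠ 0 ∧ L.IsHomogeneous 1 ∧ L ∣ G r ∧ L ∣ G r'

/-- `μ = (1^{f₁}⋯d^{f_d}) ∈ S_λ^{(a)}`, where `λ = (1^{e₁}⋯d^{e_d})`. -/
def SlamA (e f : ℕ → ℕ) : Prop :=
  ∃ r₁ r₂ : ℕ, r₁ ≠ r₂ ∧ 1 ≤ e r₁ ∧ 1 ≤ e r₂ ∧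
    f r₁ = e r₁ - 1 ∧ f r₂ = e r₂ - 1 ∧ f (r₁ + r₂) = e (r₁ + r₂) + 1 ∧
    ∀ r : ℕ, r ≠ r₁ → r ≠ r₂ → r ≠ r₁ + r₂ → f r = e r

/-- `μ = (1^{f₁}⋯d^{f_d}) ∈ S_λ^{(b)}`, where `λ = (1^{e₁}⋯d^{e_d})`. -/
def SlamB (e f : ℕ → ℕ) : Prop :=
  ∃ r₁ r₂ t : ℕ, r₁ ≠ r₂ ∧ 1 ≤ t ∧ r₁ = t * r₂ ∧ 1 ≤ e r₁ ∧ t ≤ e r₂ ∧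
    f r₁ = e r₁ + 1 ∧ f r₂ = e r₂ - t ∧
    ∀ r : ℕ, r ≠ r₁ → r ≠ r₂ → f r = e r

/-- `μ = (1^{f₁}⋯d^{f_d}) ∈ S_λ^{(c)}`, where `λ = (1^{e₁}⋯d^{e_d})`. -/
def SlamC (e f : ℕ → ℕ) : Prop :=
  ∃ r₁ r₂ r₃ t₁ t₂ : ℕ, r₁ ≠ r₂ ∧ r₁ ≠ r₃ ∧ r₂ ≠ r₃ ∧ 1 ≤ t₁ ∧ 1 ≤ t₂ ∧
    r₃ = t₁ * r₁ ∧ r₃ = t₂ * r₂ ∧ t₁ ≤ e r₁ ∧ t₂ ≤ e r₂ ∧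
    f r₁ = e r₁ - t₁ ∧ f r₂ = e r₂ - t₂ ∧ f r₃ = e r₃ + 2 ∧
    ∀ r : ℕ, r ≠ r₁ → r ≠ r₂ → r ≠ r₃ → f r = e r

/-- Let `(G_r)`, `(H_r)` be two inequivalent factorizations of type `λ` of a nonzero
binary form `F`, each with pairwise coprime components, and let `r₁` be the largest
index at which `G_{r₁}` is not a scalar multiple of `H_{r₁}`. Then some linear form `L`
divides `G_{r₁}` but not `H_{r₁}`. -/

theorem largest_differing_index_linear_factor (d : ℕ) (e : ℕ → ℕ)
    (hd : 1 ≤ d) (hpart : ∑ r ∈ Finset.Icc 1 d, r * e r = d)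
    (F : MvPolynomial (Fin 2) ℂ) (hF0 : F ≠ 0) (hF : F.IsHomogeneous d)
    (G H : ℕ → MvPolynomial (Fin 2) ℂ)
    (hG : IsFactorizationOfType d e F G) (hH : IsFactorizationOfType d e F H)
    (hGcop : PairwiseCoprimeComponents d G) (hHcop : PairwiseCoprimeComponents d H)
    (hinequiv : ¬ EquivFactorizations d G H)
    (r₁ : ℕ) (hr₁ : r₁ ∈ Finset.Icc 1 d)
    (hdiff : ¬ ∃ c : ℂ, c ≠ 0 ∧ H r₁ = c • G r₁)
    (hmax : ∀ r ∈ Finset.Icc 1 d, r₁ < r → ∃ c : ℂ, c ≠ 0 ∧ H r = c • G r) :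
    ∃ L : MvPolynomial (Fin 2) ℂ, L ≠ 0 ∧ L.IsHomogeneous 1 ∧
      L ∣ G r₁ ∧ ¬ L ∣ H r₁ := by
  by_contra hcon
  push_neg at hcon
  obtain ⟨hGhom, c, hc, hFG⟩ := hG
  obtain ⟨hHhom, c', hc', hFH⟩ := hH
  have hGne : ∀ r ∈ Finset.Icc 1 d, G r ≠ 0 := by
    intro r hr h0
    apply hF0
    rw [hFG, Finset.prod_eq_zero hr (by
      rw [h0, zero_pow (by have := (Finset.mem_Icc.mp hr).1; omega)]), smul_zero]
  have hHne : ∀ r ∈ Finset.Icc 1 d, H r ≠ 0 := by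
    intro r hr h0
    apply hF0
    rw [hFH, Finset.prod_eq_zero hr (by
      rw [h0, zero_pow (by have := (Finset.mem_Icc.mp hr).1; omega)]), smul_zero]
  have hrepG : ∀ r : ℕ, ∃ (a : ℂ) (s : Multiset (Option ℂ)), a ≠ 0 ∧
      (r ∈ Finset.Icc 1 d → (Multiset.card s = e r ∧ G r = C a * (s.map ell).prod)) := by
    intro r
    by_cases hr : r ∈ Finset.Icc 1 d
    · obtain ⟨a, s, ha, hcard, hGeq⟩ := exists_linear_rep (hGne r hr) (hGhom r hr)
      exact ⟨a, s, ha, fun _ => ⟨hcard, hGeq⟩⟩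
    · exact ⟨1, 0, one_ne_zero, fun h => absurd h hr⟩
  have hrepH : ∀ r : ℕ, ∃ (b : ℂ) (t : Multiset (Option ℂ)), b ≠ 0 ∧
      (r ∈ Finset.Icc 1 d → (Multiset.card t = e r ∧ H r = C b * (t.map ell).prod)) := by
    intro r
    by_cases hr : r ∈ Finset.Icc 1 d
    · obtain ⟨b, t, hb, hcard, hHeq⟩ := exists_linear_rep (hHne r hr) (hHhom r hr)
      exact ⟨b, t, hb, fun _ => ⟨hcard, hHeq⟩⟩
    · exact ⟨1, 0, one_ne_zero, fun h => absurd h hr⟩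
  choose A S hA hAS using hrepG
  choose B T hB hBT using hrepH
  have hprodG : ∏ r ∈ Finset.Icc 1 d, G r ^ r
      = C (∏ r ∈ Finset.Icc 1 d, A r ^ r) *
        (((∑ r ∈ Finset.Icc 1 d, r • S r).map ell).prod) := by
    rw [← prod_rep]
    exact Finset.prod_congr rfl fun r hr => by rw [(hAS r hr).2]
  have hprodH : ∏ r ∈ Finset.Icc 1 d, H r ^ r
      = C (∏ r ∈ Finset.Icc 1 d, B r ^ r) *
        (((∑ r ∈ Finset.Icc 1 d, r • T r).map ell).prod) := by
    rw [← prod_rep]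
    exact Finset.prod_congr rfl fun r hr => by rw [(hBT r hr).2]
  have key : C (c * ∏ r ∈ Finset.Icc 1 d, A r ^ r) *
        (((∑ r ∈ Finset.Icc 1 d, r • S r).map ell).prod)
      = C (c' * ∏ r ∈ Finset.Icc 1 d, B r ^ r) *
        (((∑ r ∈ Finset.Icc 1 d, r • T r).map ell).prod) := by
    have h := hFG.symm.trans hFH
    rw [smul_eq_C_mul, smul_eq_C_mul, hprodG, hprodH, ← mul_assoc, ← C_mul,
      ← mul_assoc, ← C_mul] at h
    exact h
  have hAne : (∏ r ∈ Finset.Icc 1 d, A r ^ r) ≠ 0 :=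
    Finset.prod_ne_zero_iff.mpr fun r _ => pow_ne_zero _ (hA r)
  have hBne : (∏ r ∈ Finset.Icc 1 d, B r ^ r) ≠ 0 :=
    Finset.prod_ne_zero_iff.mpr fun r _ => pow_ne_zero _ (hB r)
  have hST : (∑ r ∈ Finset.Icc 1 d, r • S r) = ∑ r ∈ Finset.Icc 1 d, r • T r :=
    rep_unique _ _ _ _ (mul_ne_zero hc hAne) (mul_ne_zero hc' hBne) key
  obtain ⟨hcardS, hGr₁⟩ := hAS r₁ hr₁
  obtain ⟨hcardT, hHr₁⟩ := hBT r₁ hr₁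
  have hr₁pos : 1 ≤ r₁ := (Finset.mem_Icc.mp hr₁).1
  have hcount : ∀ u ∈ S r₁, Multiset.count u (S r₁) = Multiset.count u (T r₁) := by
    intro u hu
    have hdG : ell u ∣ G r₁ := by
      rw [hGr₁]; exact (ell_dvd_rep_iff (hA r₁) _).mpr hu
    have hdH : ell u ∣ H r₁ := hcon _ (ell_ne_zero u) (ell_isHomogeneous u) hdG
    have huT : u ∈ T r₁ := (ell_dvd_rep_iff (hB r₁) _).mp (by rw [← hHr₁]; exact hdH)
    have hnotS : ∀ r ∈ Finset.Icc 1 d, r ≠ r₁ → u ∉ S r := by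
      intro r hr hne hmem
      exact hGcop r₁ hr₁ r hr (Ne.symm hne) ⟨ell u, ell_ne_zero u, ell_isHomogeneous u, hdG,
        by rw [(hAS r hr).2]; exact (ell_dvd_rep_iff (hA r) _).mpr hmem⟩
    have hnotT : ∀ r ∈ Finset.Icc 1 d, r ≠ r₁ → u ∉ T r := by
      intro r hr hne hmem
      exact hHcop r₁ hr₁ r hr (Ne.symm hne) ⟨ell u, ell_ne_zero u, ell_isHomogeneous u, hdH,
        by rw [(hBT r hr).2]; exact (ell_dvd_rep_iff (hB r) _).mpr hmem⟩
    have e1 : Multiset.count u (∑ r ∈ Finset.Icc 1 d, r • S r)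
        = r₁ * Multiset.count u (S r₁) := by
      have h := map_sum (Multiset.countAddMonoidHom u)
        (fun r => r • S r) (Finset.Icc 1 d)
      simp only [Multiset.coe_countAddMonoidHom] at h
      rw [h, Finset.sum_eq_single_of_mem r₁ hr₁ (fun r hr hne => by
        rw [Multiset.count_nsmul, Multiset.count_eq_zero.mpr (hnotS r hr hne), Nat.mul_zero]),
        Multiset.count_nsmul]
    have e2 : Multiset.count u (∑ r ∈ Finset.Icc 1 d, r • T r)
        = r₁ * Multiset.count u (T r₁) := by
      have h := map_sum (Multiset.countAddMonoidHom u)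
        (fun r => r • T r) (Finset.Icc 1 d)
      simp only [Multiset.coe_countAddMonoidHom] at h
      rw [h, Finset.sum_eq_single_of_mem r₁ hr₁ (fun r hr hne => by
        rw [Multiset.count_nsmul, Multiset.count_eq_zero.mpr (hnotT r hr hne), Nat.mul_zero]),
        Multiset.count_nsmul]
    have : r₁ * Multiset.count u (S r₁) = r₁ * Multiset.count u (T r₁) := by
      rw [← e1, ← e2, hST]
    exact Nat.eq_of_mul_eq_mul_left (by omega) this
  have hle : S r₁ ≤ T r₁ := Multiset.le_iff_count.mpr (fun u => by
    by_cases hu : u ∈ S r₁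
    · exact (hcount u hu).le
    · rw [Multiset.count_eq_zero.mpr hu]; exact Nat.zero_le _)
  have hTS : S r₁ = T r₁ :=
    Multiset.eq_of_le_of_card_le hle (by rw [hcardS, hcardT])
  apply hdiff
  refine ⟨B r₁ * (A r₁)⁻¹, mul_ne_zero (hB r₁) (inv_ne_zero (hA r₁)), ?_⟩
  rw [hHr₁, ← hTS, hGr₁, smul_eq_C_mul, ← mul_assoc, ← C_mul,
    inv_mul_cancel_right₀ (hA r₁) (B r₁)]
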